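/- Let n ≥ 1 and d ≥ 1 be integers and let Q(x) = A_0 + Σ_{α=1}^d A_α s_α(x) + Σ_{α=1}^d A_{αα} s_{αα}(x). Then Q(x_1, …, x_n) ≥ 0 for all tuples (x_1, …, x_n) of unit vectors x_i ∈ S^{d−1} if and only if Q(x_1, …, x_n) ≥ 0 for all tuples (x_1, …, x_n) of unit vectors x_i ∈ S^{d−1} such that the set {x_1, …, x_n} has cardinality at most 2d. -/

import Mathlib

open scoped BigOperators

/-- `sLin n d α x = ∑ i, ξ_{i,α}` -/
noncomputable def sLin (n d : ℕ) (α : Fin d) (x : Fin n → Fin d → ℝ) : ℝ :=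
  ∑ i, x i α

/-- `sQuad n d α x = ∑_{i ≠ j} ξ_{i,α} ξ_{j,α}` (sum over ordered pairs). -/
noncomputable def sQuad (n d : ℕ) (α : Fin d) (x : Fin n → Fin d → ℝ) : ℝ :=
  ∑ i, ∑ j, if i = j then 0 else x i α * x j α

/-- `Qpoly n d A0 A B x = A0 + ∑ α A_α s_α(x) + ∑ α A_{αα} s_{αα}(x)` -/
noncomputable def Qpoly (n d : ℕ) (A0 : ℝ) (A B : Fin d → ℝ)
    (x : Fin n → Fin d → ℝ) : ℝ :=
  A0 + ∑ α, A α * sLin n d α x + ∑ α, B α * sQuad n d α x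

section helpers

variable {n d : ℕ}

lemma sQuad_eq (α : Fin d) (x : Fin n → Fin d → ℝ) :
    sQuad n d α x = (∑ i, x i α) ^ 2 - ∑ i, (x i α) ^ 2 := by
  unfold sQuad
  have h : ∀ i : Fin n, (∑ j, if i = j then 0 else x i α * x j α)
      = x i α * (∑ j, x j α) - (x i α)^2 := by
    intro i
    have h1 : (∑ j, if i = j then (x i α * x j α) else 0) = x i α * x i α := by
      rw [Finset.sum_ite_eq]; simp
    have h2 : (∑ j, if i = j then 0 else x i α * x j α)
        = (∑ j, x i α * x j α) - (∑ j, if i = j then (x i α * x j α) else 0) := by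
      rw [← Finset.sum_sub_distrib]
      apply Finset.sum_congr rfl
      intro j _
      by_cases hij : i = j <;> simp [hij]
    rw [h2, h1, ← Finset.mul_sum]
    ring
  rw [Finset.sum_congr rfl (fun i _ => h i), Finset.sum_sub_distrib, sq, Finset.sum_mul]

lemma Qpoly_eq (A0 : ℝ) (A B : Fin d → ℝ) (x : Fin n → Fin d → ℝ) :
    Qpoly n d A0 A B x = A0 + ∑ α, A α * (∑ i, x i α)
      + ∑ α, B α * (∑ i, x i α) ^ 2 - ∑ α, B α * ∑ i, (x i α) ^ 2 := by
  unfold Qpoly sLin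
  have : (∑ α, B α * sQuad n d α x)
      = ∑ α, B α * (∑ i, x i α) ^ 2 - ∑ α, B α * ∑ i, (x i α) ^ 2 := by
    rw [← Finset.sum_sub_distrib]
    exact Finset.sum_congr rfl fun α _ => by rw [sQuad_eq]; ring
  rw [this]
  ring

end helpers

section pert
variable {n d : ℕ}

lemma abs_sQuad_le (α : Fin d) (x : Fin n → Fin d → ℝ)
    (hx : ∀ i, ∑ β, (x i β) ^ 2 = 1) : |sQuad n d α x| ≤ (n : ℝ) ^ 2 := by
  have hb : ∀ i, |x i α| ≤ 1 := by
    intro i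
    have h1 : (x i α) ^ 2 ≤ 1 := by
      rw [← hx i]
      exact Finset.single_le_sum (f := fun β => (x i β) ^ 2)
        (fun β _ => sq_nonneg _) (Finset.mem_univ α)
    nlinarith [abs_nonneg (x i α), sq_abs (x i α)]
  calc |sQuad n d α x| ≤ ∑ i, |∑ j, if i = j then 0 else x i α * x j α| :=
        Finset.abs_sum_le_sum_abs _ _
    _ ≤ ∑ _i : Fin n, ∑ _j : Fin n, (1 : ℝ) := by
        apply Finset.sum_le_sum; intro i _
        calc |∑ j, if i = j then 0 else x i α * x j α|
            ≤ ∑ j, |if i = j then 0 else x i α * x j α| := Finset.abs_sum_le_sum_abs _ _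
          _ ≤ ∑ _j : Fin n, (1 : ℝ) := by
              apply Finset.sum_le_sum; intro j _
              by_cases hij : i = j
              · simp [hij]
              · simp only [hij, if_false, abs_mul]
                calc |x i α| * |x j α| ≤ 1 * 1 :=
                      mul_le_mul (hb i) (hb j) (abs_nonneg _) zero_le_one
                  _ = 1 := by ring
    _ = (n : ℝ) ^ 2 := by simp [Finset.sum_const, Finset.card_univ]; ring

lemma Qpoly_pert (A0 : ℝ) (A B B' : Fin d → ℝ) (x : Fin n → Fin d → ℝ)
    (hx : ∀ i, ∑ β, (x i β) ^ 2 = 1) :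
    |Qpoly n d A0 A B x - Qpoly n d A0 A B' x| ≤ (∑ α, |B α - B' α|) * (n : ℝ) ^ 2 := by
  have hdiff : Qpoly n d A0 A B x - Qpoly n d A0 A B' x
      = ∑ α, (B α - B' α) * sQuad n d α x := by
    unfold Qpoly
    have h3 : A0 + ∑ α, A α * sLin n d α x + ∑ α, B α * sQuad n d α x -
        (A0 + ∑ α, A α * sLin n d α x + ∑ α, B' α * sQuad n d α x)
        = ∑ α, B α * sQuad n d α x - ∑ α, B' α * sQuad n d α x := by ring
    rw [h3, ← Finset.sum_sub_distrib]
    exact Finset.sum_congr rfl fun α _ => by ring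
  rw [hdiff, Finset.sum_mul]
  calc |∑ α, (B α - B' α) * sQuad n d α x| ≤ ∑ α, |(B α - B' α) * sQuad n d α x| :=
        Finset.abs_sum_le_sum_abs _ _
    _ ≤ ∑ α, |B α - B' α| * (n : ℝ) ^ 2 := by
        apply Finset.sum_le_sum; intro α _
        rw [abs_mul]
        exact mul_le_mul_of_nonneg_left (abs_sQuad_le α x hx) (abs_nonneg _)

lemma exists_injective_near (B : Fin d → ℝ) {ε : ℝ} (hε : 0 < ε) :
    ∃ B' : Fin d → ℝ, Function.Injective B' ∧ ∑ α, |B α - B' α| ≤ ε := by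
  classical
  set bad : Set ℝ :=
    (fun p : Fin d × Fin d => (B p.2 - B p.1) / ((p.1 : ℝ) - (p.2 : ℝ))) '' Set.univ with hbad
  have hbadfin : bad.Finite := Set.Finite.image _ Set.finite_univ
  set δ : ℝ := ε / ((d : ℝ) * d + 1) with hδdef
  have hδ : 0 < δ := by positivity
  have hIoo : (Set.Ioo (0 : ℝ) δ).Infinite := Set.infinite_coe_iff.1 (Set.Ioo.infinite hδ)
  obtain ⟨t, ht⟩ := (hIoo.diff hbadfin).nonempty
  have ht1 : 0 < t := ht.1.1
  have ht2 : t < δ := ht.1.2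
  refine ⟨fun α => B α + t * (α : ℝ), ?_, ?_⟩
  · intro α β hαβ
    by_contra hne
    apply ht.2
    rw [hbad]
    refine ⟨(α, β), Set.mem_univ _, ?_⟩
    have hcast : (α : ℝ) ≠ (β : ℝ) := by
      simp only [ne_eq, Nat.cast_inj]
      exact fun h => hne (Fin.ext h)
    have h : B α + t * (α : ℝ) = B β + t * (β : ℝ) := hαβ
    rw [div_eq_iff (sub_ne_zero.mpr hcast)]
    linarith
  · have hstep : ∀ α : Fin d, |B α - (B α + t * (α : ℝ))| ≤ t * d := by
      intro α
      have : |B α - (B α + t * (α : ℝ))| = t * (α : ℝ) := by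
        rw [abs_sub_comm]
        simp only [add_sub_cancel_left]
        rw [abs_of_nonneg (by positivity)]
      rw [this]
      have : (α : ℝ) ≤ d := by
        exact_mod_cast le_of_lt α.isLt
      nlinarith
    calc ∑ α, |B α - (B α + t * (α : ℝ))| ≤ ∑ _α : Fin d, t * d :=
          Finset.sum_le_sum fun α _ => hstep α
      _ = (d : ℝ) * (t * d) := by
          rw [Finset.sum_const, Finset.card_univ, nsmul_eq_mul, Fintype.card_fin]
      _ ≤ ε := by
          have h1 : (d : ℝ) * (t * d) ≤ δ * ((d : ℝ) * d + 1) := by nlinarith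
          have h2 : δ * ((d : ℝ) * d + 1) = ε := by
            rw [hδdef]; field_simp
          linarith

end pert


section countzero
variable {n d : ℕ}

lemma range_subset_pair_ncard {y : Fin n → Fin d → ℝ} {f g : Fin d → ℝ}
    (h : ∀ i, y i = f ∨ y i = g) : (Set.range y).ncard ≤ 2 := by
  have hsub : Set.range y ⊆ {f, g} := by
    rintro - ⟨i, rfl⟩
    rcases h i with h' | h' <;> simp [h']
  calc (Set.range y).ncard ≤ ({f, g} : Set (Fin d → ℝ)).ncard :=
        Set.ncard_le_ncard hsub ((Set.finite_singleton g).insert f)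
    _ ≤ 2 := (Set.ncard_insert_le _ _).trans (by simp [Set.ncard_singleton])

lemma count_lemma0 (hn : 1 ≤ n) (hd : 1 ≤ d) (lam : Fin n → ℝ) (mu : Fin d → ℝ)
    (hne : (∃ i, lam i ≠ 0) ∨ (∃ α, mu α ≠ 0))
    (y : Fin n → Fin d → ℝ) (hy : ∀ i, ∑ α, (y i α) ^ 2 = 1)
    (hstat : ∀ i α, 2 * lam i * y i α = -mu α) :
    (Set.range y).ncard ≤ 2 * d := by
  classical
  have hlam : ∀ i, lam i ≠ 0 := by
    intro i hi
    have hmu : ∀ α, mu α = 0 := by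
      intro α
      have h := hstat i α
      rw [hi] at h
      simpa using h.symm
    have hlamall : ∀ j, lam j = 0 := by
      intro j
      by_contra hj
      have hyj : ∀ α, y j α = 0 := by
        intro α
        have h := hstat j α
        rw [hmu α, neg_zero] at h
        rcases mul_eq_zero.mp h with h' | h'
        · exact absurd (by linarith : lam j = 0) hj
        · exact h'
      have h := hy j
      rw [Finset.sum_congr rfl fun α _ => by rw [hyj α]] at h
      simp at h
    rcases hne with ⟨i', hi'⟩ | ⟨α', hα'⟩
    · exact hi' (hlamall i')
    · exact hα' (hmu α')
  have h2l : ∀ i, (2 : ℝ) * lam i ≠ 0 := by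
    intro i hc
    exact hlam i (by linarith)
  have hform : ∀ i α, y i α = -mu α / (2 * lam i) := by
    intro i α
    rw [eq_div_iff (h2l i)]
    linear_combination hstat i α
  set M : ℝ := ∑ α, (mu α) ^ 2 with hM
  have hM0 : 0 ≤ M := Finset.sum_nonneg fun α _ => sq_nonneg _
  have hMi : ∀ i, (2 * lam i) ^ 2 = M := by
    intro i
    have h2 := hy i
    rw [Finset.sum_congr rfl fun α _ => by rw [hform i α]] at h2
    have h3 : ∑ α, (-mu α / (2 * lam i)) ^ 2 = M / (2 * lam i) ^ 2 := by
      rw [hM, Finset.sum_div]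
      exact Finset.sum_congr rfl fun α _ => by ring
    rw [h3, div_eq_one_iff_eq (pow_ne_zero 2 (h2l i))] at h2
    exact h2.symm
  set t : ℝ := Real.sqrt M with htdef
  have ht2 : t ^ 2 = M := Real.sq_sqrt hM0
  have hcases : ∀ i, 2 * lam i = t ∨ 2 * lam i = -t := by
    intro i
    have hfac : (2 * lam i - t) * (2 * lam i + t) = 0 := by nlinarith [hMi i]
    rcases mul_eq_zero.mp hfac with h | h
    · exact Or.inl (by linarith)
    · exact Or.inr (by linarith)
  have hyi : ∀ i, y i = (fun α => -mu α / t) ∨ y i = (fun α => mu α / t) := by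
    intro i
    rcases hcases i with h | h
    · left; funext α; rw [hform i α, h]
    · right; funext α; rw [hform i α, h]; ring
  calc (Set.range y).ncard ≤ 2 := range_subset_pair_ncard hyi
    _ ≤ 2 * d := by omega

end countzero

section countmain
open Polynomial
variable {n d : ℕ}

lemma count_lemma (hd : 1 ≤ d) {B : Fin d → ℝ} (hB : Function.Injective B)
    {ν : ℝ} (hν : ν ≠ 0) (lam : Fin n → ℝ) (mu : Fin d → ℝ)
    {y : Fin n → Fin d → ℝ} (hy : ∀ i, ∑ α, (y i α) ^ 2 = 1)
    (hstat : ∀ i α, 2 * (lam i - ν * B α) * y i α = -mu α) :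
    (Set.range y).ncard ≤ 2 * d := by
  classical
  set q : Fin d → Polynomial ℝ := fun α => X - C (ν * B α) with hq
  set Pbig : Polynomial ℝ := ∏ α, (q α) ^ 2 with hPbig
  set Psmall : Polynomial ℝ :=
    ∑ α, C ((mu α / 2) ^ 2) * ∏ β ∈ Finset.univ.erase α, (q β) ^ 2 with hPsmall
  set P : Polynomial ℝ := Pbig - Psmall with hP
  have hqmonic : ∀ α, (q α).Monic := fun α => monic_X_sub_C _
  have hq2deg : ∀ α : Fin d, ((q α) ^ 2).natDegree = 2 := by
    intro α
    rw [natDegree_pow, natDegree_X_sub_C]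
  have hPbigmonic : Pbig.Monic :=
    monic_prod_of_monic _ _ fun α _ => (hqmonic α).pow 2
  have hPbigdeg : Pbig.natDegree = 2 * d := by
    rw [hPbig, natDegree_prod _ _ (fun α _ => pow_ne_zero 2 (hqmonic α).ne_zero)]
    rw [Finset.sum_congr rfl fun α _ => hq2deg α]
    simp [Finset.sum_const, Finset.card_univ, mul_comm]
  have hPsmalldeg : Psmall.natDegree ≤ 2 * d - 2 := by
    apply Polynomial.natDegree_sum_le_of_forall_le
    intro α _
    calc (C ((mu α / 2) ^ 2) * ∏ β ∈ Finset.univ.erase α, (q β) ^ 2).natDegree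
        ≤ (C ((mu α / 2) ^ 2)).natDegree
          + (∏ β ∈ Finset.univ.erase α, (q β) ^ 2).natDegree := natDegree_mul_le
      _ ≤ 0 + ∑ β ∈ Finset.univ.erase α, ((q β) ^ 2).natDegree := by
          gcongr
          · exact le_of_eq (natDegree_C _)
          · exact natDegree_prod_le _ _
      _ ≤ ∑ _β ∈ Finset.univ.erase α, 2 := by
          rw [zero_add]
          exact Finset.sum_le_sum fun β _ => le_of_eq (hq2deg β)
      _ = 2 * d - 2 := by
          rw [Finset.sum_const, Finset.card_erase_of_mem (Finset.mem_univ α)]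
          simp [Finset.card_univ]
          omega
  have hdeglt : Psmall.natDegree < Pbig.natDegree := by
    rw [hPbigdeg]; omega
  have hPdeg : P.natDegree = 2 * d := by
    rw [hP, natDegree_sub_eq_left_of_natDegree_lt hdeglt, hPbigdeg]
  have hPne : P ≠ 0 := by
    intro h0
    rw [hP, sub_eq_zero] at h0
    rw [h0] at hdeglt
    exact lt_irrefl _ hdeglt
  -- class data
  set D : ℝ → Finset (Fin d) := fun v => Finset.univ.filter (fun α => ν * B α = v) with hD
  set w : ℝ → ℕ := fun v => if (D v).Nonempty then 2 else 1 with hw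
  set V : Finset ℝ := Finset.image lam Finset.univ with hV
  have hDsub : ∀ v α, α ∈ D v → ν * B α = v := by
    intro v α hα
    simpa [hD] using (Finset.mem_filter.mp hα).2
  have hDone : ∀ v α β, α ∈ D v → β ∈ D v → α = β := by
    intro v α β hα hβ
    exact hB (mul_left_cancel₀ hν ((hDsub v α hα).trans (hDsub v β hβ).symm))
  -- mu vanishes on D v for v in the image of lam
  have hmuD : ∀ i α, α ∈ D (lam i) → mu α = 0 := by
    intro i α hα
    have h := hstat i α
    rw [show lam i - ν * B α = 0 by rw [hDsub (lam i) α hα]; ring] at h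
    simpa using h.symm
  -- determined coordinates
  have hdet : ∀ i α, α ∉ D (lam i) → y i α = mu α / (2 * (ν * B α - lam i)) := by
    intro i α hα
    have hne : ν * B α - lam i ≠ 0 := by
      intro hc
      apply hα
      rw [hD]
      simp only [Finset.mem_filter, Finset.mem_univ, true_and]
      linarith [hc]
    rw [eq_div_iff (by intro hc; apply hne; linarith [mul_eq_zero.mp hc] ; )]
    linear_combination -(hstat i α)
  -- Fact B : multiplicity
  have hFactB : ∀ v ∈ V, (X - C v) ^ (w v) ∣ P := by
    intro v hv
    obtain ⟨i, -, hi⟩ := Finset.mem_image.mp hv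
    by_cases hne : (D v).Nonempty
    · obtain ⟨α₀, hα₀⟩ := hne
      have hqα₀ : q α₀ = X - C v := by
        rw [show q α₀ = X - C (ν * B α₀) from rfl, hDsub v α₀ hα₀]
      have hne' : (D v).Nonempty := ⟨α₀, hα₀⟩
      have hwv : w v = 2 := by simp [hw, hne']
      rw [hwv, hP]
      apply dvd_sub
      · rw [← hqα₀, hPbig]
        exact Finset.dvd_prod_of_mem (fun α => (q α) ^ 2) (Finset.mem_univ α₀)
      · rw [hPsmall]
        apply Finset.dvd_sum
        intro α _
        by_cases hαα₀ : α = α₀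
        · have hμ : mu α = 0 := by
            subst hαα₀
            exact hmuD i α (by rw [hi]; exact hα₀)
          rw [hμ]
          simp
        · rw [← hqα₀]
          exact Dvd.dvd.mul_left
            (Finset.dvd_prod_of_mem (fun β => (q β) ^ 2)
              (Finset.mem_erase.mpr ⟨fun h => hαα₀ h.symm, Finset.mem_univ _⟩)) _
    · -- D v empty : v is a simple root
      have hwv : w v = 1 := by simp only [hw, if_neg hne]
      rw [hwv, pow_one, dvd_iff_isRoot]
      have hmem : ∀ α : Fin d, α ∉ D v := fun α hm => hne ⟨α, hm⟩
      have hevalq : ∀ α, eval v (q α) = v - ν * B α := by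
        intro α
        rw [show q α = X - C (ν * B α) from rfl]
        simp
      have hmusq : ∀ α, (mu α / 2) ^ 2 = (v - ν * B α) ^ 2 * (y i α) ^ 2 := by
        intro α
        have h := hstat i α
        rw [hi] at h
        have hmu' : mu α = -(2 * (v - ν * B α) * y i α) := by linarith [h]
        rw [hmu']
        ring
      have hev : eval v P = (∏ α, (v - ν * B α) ^ 2)
          - ∑ α, (v - ν * B α) ^ 2 * (y i α) ^ 2
            * ∏ β ∈ Finset.univ.erase α, (v - ν * B β) ^ 2 := by
        rw [hP, hPsmall, hPbig]
        rw [eval_sub]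
        congr 1
        · rw [eval_prod]
          exact Finset.prod_congr rfl fun α _ => by rw [eval_pow, hevalq α]
        · rw [eval_finset_sum]
          apply Finset.sum_congr rfl
          intro α _
          rw [eval_mul, eval_C, eval_prod, hmusq α]
          rw [Finset.prod_congr rfl fun β _ => by rw [eval_pow, hevalq β]]
      rw [IsRoot.def, hev]
      have hswap : ∀ α : Fin d, (v - ν * B α) ^ 2 * (y i α) ^ 2
          * ∏ β ∈ Finset.univ.erase α, (v - ν * B β) ^ 2
          = (y i α) ^ 2 * ∏ β, (v - ν * B β) ^ 2 := by
        intro α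
        rw [← Finset.mul_prod_erase Finset.univ _ (Finset.mem_univ α)]
        ring
      rw [Finset.sum_congr rfl fun α _ => hswap α, ← Finset.sum_mul, hy i, one_mul]
      ring
  -- Fact C : few values per class
  have hFactC : ∀ v : ℝ, ∃ F : Finset (Fin d → ℝ),
      F.card ≤ w v ∧ ∀ i, lam i = v → y i ∈ F := by
    intro v
    by_cases hne : (D v).Nonempty
    · obtain ⟨α₀, hα₀⟩ := hne
      have hne' : (D v).Nonempty := ⟨α₀, hα₀⟩
      have hwv : w v = 2 := by simp [hw, hne']
      set g : Fin d → ℝ := fun α => mu α / (2 * (ν * B α - v)) with hg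
      set ρ : ℝ := 1 - ∑ α ∈ Finset.univ.erase α₀, (g α) ^ 2 with hρ
      refine ⟨{Function.update g α₀ (Real.sqrt ρ), Function.update g α₀ (-Real.sqrt ρ)}, ?_, ?_⟩
      · rw [hwv]
        exact (Finset.card_insert_le _ _).trans (by simp)
      · intro i hi
        have hdet' : ∀ α, α ≠ α₀ → y i α = g α := by
          intro α hα
          have hm : α ∉ D (lam i) := by
            rw [hi]
            intro hmem
            exact hα (hDone v α α₀ hmem hα₀)
          rw [hdet i α hm, hi]
        have hsq : (y i α₀) ^ 2 = ρ := by
          have h1 := hy i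
          rw [← Finset.add_sum_erase Finset.univ _ (Finset.mem_univ α₀)] at h1
          rw [Finset.sum_congr rfl (fun α hα => by
            rw [hdet' α (Finset.ne_of_mem_erase hα)])] at h1
          rw [hρ]
          linarith
        have hupd : y i = Function.update g α₀ (y i α₀) := by
          funext α
          by_cases hα : α = α₀
          · subst hα; rw [Function.update_self]
          · rw [Function.update_of_ne hα, hdet' α hα]
        have habs : |y i α₀| = Real.sqrt ρ := by
          rw [← hsq, Real.sqrt_sq_eq_abs]
        rcases abs_cases (y i α₀) with ⟨h1, -⟩ | ⟨h1, -⟩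
        · simp only [Finset.mem_insert, Finset.mem_singleton]
          left; rw [hupd, ← habs, h1]
        · simp only [Finset.mem_insert, Finset.mem_singleton]
          right; rw [hupd]
          rw [show y i α₀ = -Real.sqrt ρ by rw [← habs, h1]; ring]
    · have hwv : w v = 1 := by simp only [hw, if_neg hne]
      refine ⟨{fun α => mu α / (2 * (ν * B α - v))}, by rw [hwv]; simp, ?_⟩
      intro i hi
      have hyg : y i = fun α => mu α / (2 * (ν * B α - v)) := by
        funext α
        have hm : α ∉ D (lam i) := by
          rw [hi]
          intro hmm
          exact hne ⟨α, hmm⟩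
        rw [hdet i α hm, hi]
      simp [hyg]
  -- counting roots
  have hsumw : ∑ v ∈ V, w v ≤ 2 * d := by
    have hcount : ∀ v ∈ V, w v ≤ P.roots.count v := by
      intro v hv
      rw [count_roots]
      exact (le_rootMultiplicity_iff hPne).mpr (hFactB v hv)
    have hVsub : V ⊆ P.roots.toFinset := by
      intro v hv
      rw [Multiset.mem_toFinset, ← Multiset.count_pos]
      have h1 : 1 ≤ w v := by simp only [hw]; split <;> omega
      have := hcount v hv
      omega
    calc ∑ v ∈ V, w v ≤ ∑ v ∈ V, P.roots.count v := Finset.sum_le_sum hcount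
      _ ≤ ∑ v ∈ P.roots.toFinset, P.roots.count v :=
          Finset.sum_le_sum_of_subset hVsub
      _ = Multiset.card P.roots := Multiset.toFinset_sum_count_eq _
      _ ≤ P.natDegree := P.card_roots'
      _ = 2 * d := hPdeg
  -- assemble
  choose F hFcard hFmem using hFactC
  have hsub : Set.range y ⊆ ↑(V.biUnion F) := by
    rintro - ⟨i, rfl⟩
    rw [Finset.coe_biUnion]
    exact Set.mem_biUnion (by exact_mod_cast Finset.mem_image_of_mem lam (Finset.mem_univ i))
      (hFmem (lam i) i rfl)
  calc (Set.range y).ncard ≤ (↑(V.biUnion F) : Set (Fin d → ℝ)).ncard :=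
        Set.ncard_le_ncard hsub ((V.biUnion F).finite_toSet)
    _ = (V.biUnion F).card := Set.ncard_coe_finset _
    _ ≤ ∑ v ∈ V, (F v).card := Finset.card_biUnion_le
    _ ≤ ∑ v ∈ V, w v := Finset.sum_le_sum fun v _ => hFcard v
    _ ≤ 2 * d := hsumw

end countmain

section keytest
variable {n d : ℕ}

noncomputable def pr (n d : ℕ) (i : Fin n) (α : Fin d) :
    (Fin n → Fin d → ℝ) →L[ℝ] ℝ :=
  (ContinuousLinearMap.proj (R := ℝ) (φ := fun _ : Fin d => ℝ) α).comp
    (ContinuousLinearMap.proj (R := ℝ) (φ := fun _ : Fin n => (Fin d → ℝ)) i)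

lemma pr_apply (i : Fin n) (α : Fin d) (y : Fin n → Fin d → ℝ) :
    pr n d i α y = y i α := rfl

lemma hasStrict_coord (z : Fin n → Fin d → ℝ) (i : Fin n) (α : Fin d) :
    HasStrictFDerivAt (fun y : Fin n → Fin d → ℝ => y i α) (pr n d i α) z :=
  (pr n d i α).hasStrictFDerivAt

end keytest

section keytest2
variable {n d : ℕ}

lemma hasStrict_constraint1 (z : Fin n → Fin d → ℝ) (i : Fin n) :
    HasStrictFDerivAt (fun y : Fin n → Fin d → ℝ => ∑ α, y i α * y i α)
      (∑ α, (z i α • pr n d i α + z i α • pr n d i α)) z :=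
  HasStrictFDerivAt.fun_sum fun α _ => (hasStrict_coord z i α).fun_mul (hasStrict_coord z i α)

lemma hasStrict_constraint2 (z : Fin n → Fin d → ℝ) (α : Fin d) :
    HasStrictFDerivAt (fun y : Fin n → Fin d → ℝ => ∑ i, y i α)
      (∑ i, pr n d i α) z :=
  HasStrictFDerivAt.fun_sum fun i _ => hasStrict_coord z i α

lemma hasStrict_obj (B : Fin d → ℝ) (z : Fin n → Fin d → ℝ) :
    HasStrictFDerivAt (fun y : Fin n → Fin d → ℝ => ∑ α, (-B α) * ∑ i, y i α * y i α)
      (∑ α, (-B α) • ∑ i, (z i α • pr n d i α + z i α • pr n d i α)) z :=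
  HasStrictFDerivAt.fun_sum fun α _ =>
    ((HasStrictFDerivAt.fun_sum fun i _ =>
      (hasStrict_coord z i α).fun_mul (hasStrict_coord z i α)).const_mul (-B α))

end keytest2

section keymain
variable {n d : ℕ}

lemma pr_single (i₀ i : Fin n) (α₀ α : Fin d) :
    pr n d i α (Pi.single i₀ (Pi.single α₀ (1 : ℝ)))
      = if i = i₀ then (if α = α₀ then (1 : ℝ) else 0) else 0 := by
  classical
  rw [pr_apply]
  rcases eq_or_ne i i₀ with h | h
  · subst h
    rw [Pi.single_eq_same, if_pos rfl, Pi.single_apply]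
  · rw [Pi.single_eq_of_ne h, if_neg h, Pi.zero_apply]

lemma key (hn : 1 ≤ n) (hd : 1 ≤ d) (A0 : ℝ) (A B : Fin d → ℝ)
    (hB : Function.Injective B) (x : Fin n → Fin d → ℝ)
    (hx : ∀ i, ∑ α, (x i α) ^ 2 = 1)
    (hcount0 : ∀ (lam : Fin n → ℝ) (mu : Fin d → ℝ),
      ((∃ i, lam i ≠ 0) ∨ (∃ α, mu α ≠ 0)) →
      ∀ (y : Fin n → Fin d → ℝ), (∀ i, ∑ α, (y i α) ^ 2 = 1) →
      (∀ i α, 2 * lam i * y i α = -mu α) → (Set.range y).ncard ≤ 2 * d)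
    (hcount : ∀ (ν : ℝ), ν ≠ 0 → ∀ (lam : Fin n → ℝ) (mu : Fin d → ℝ),
      ∀ (y : Fin n → Fin d → ℝ), (∀ i, ∑ α, (y i α) ^ 2 = 1) →
      (∀ i α, 2 * (lam i - ν * B α) * y i α = -mu α) → (Set.range y).ncard ≤ 2 * d) :
    ∃ y : Fin n → Fin d → ℝ, (∀ i, ∑ α, (y i α) ^ 2 = 1) ∧
      (Set.range y).ncard ≤ 2 * d ∧ Qpoly n d A0 A B y ≤ Qpoly n d A0 A B x := by
  classical
  set S : Fin d → ℝ := fun α => ∑ i, x i α with hS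
  set C : Set (Fin n → Fin d → ℝ) :=
    {y | (∀ i, ∑ α, y i α * y i α = 1) ∧ ∀ α, ∑ i, y i α = S α} with hC
  set φ : (Fin n → Fin d → ℝ) → ℝ :=
    fun y => ∑ α, (-B α) * ∑ i, y i α * y i α with hφ
  have hφcont : Continuous φ := by
    apply continuous_finset_sum
    intro α _
    exact continuous_const.mul (continuous_finset_sum _ fun i _ =>
      ((continuous_apply_apply i α).mul (continuous_apply_apply i α)))
  have hxC : x ∈ C := by
    refine ⟨fun i => ?_, fun α => rfl⟩
    have h := hx i
    simp only [pow_two] at h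
    exact h
  have hCclosed : IsClosed C := by
    have h1 : C = (⋂ i, {y : Fin n → Fin d → ℝ | ∑ α, y i α * y i α = 1})
        ∩ ⋂ α, {y : Fin n → Fin d → ℝ | ∑ i, y i α = S α} := by
      ext y
      simp [hC, Set.mem_iInter, forall_and]
    rw [h1]
    apply IsClosed.inter
    · exact isClosed_iInter fun i => isClosed_eq (continuous_finset_sum _ fun α _ =>
        (continuous_apply_apply i α).mul (continuous_apply_apply i α)) continuous_const
    · exact isClosed_iInter fun α => isClosed_eq (continuous_finset_sum _ fun i _ =>
        (continuous_apply_apply i α)) continuous_const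
  have hCsub : C ⊆ Metric.closedBall 0 1 := by
    intro y hy
    rw [Metric.mem_closedBall, dist_zero_right]
    rw [pi_norm_le_iff_of_nonneg zero_le_one]
    intro i
    rw [pi_norm_le_iff_of_nonneg zero_le_one]
    intro α
    rw [Real.norm_eq_abs]
    have h1 : y i α * y i α ≤ 1 := by
      rw [← hy.1 i]
      exact Finset.single_le_sum (fun β _ => mul_self_nonneg (y i β)) (Finset.mem_univ α)
    exact abs_le_one_iff_mul_self_le_one.mpr h1
  have hCcomp : IsCompact C :=
    (isCompact_closedBall (0 : Fin n → Fin d → ℝ) 1).of_isClosed_subset hCclosed hCsub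
  obtain ⟨z, hzC, hzmin⟩ := hCcomp.exists_isMinOn ⟨x, hxC⟩ hφcont.continuousOn
  -- Lagrange
  set f : (Fin n ⊕ Fin d) → (Fin n → Fin d → ℝ) → ℝ :=
    Sum.elim (fun i y => ∑ α, y i α * y i α) (fun α y => ∑ i, y i α) with hf
  set f' : (Fin n ⊕ Fin d) → ((Fin n → Fin d → ℝ) →L[ℝ] ℝ) :=
    Sum.elim (fun i => ∑ α, (z i α • pr n d i α + z i α • pr n d i α))
      (fun α => ∑ i, pr n d i α) with hf'
  have hfd : ∀ j, HasStrictFDerivAt (f j) (f' j) z := by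
    intro j
    cases j with
    | inl i => exact hasStrict_constraint1 z i
    | inr α => exact hasStrict_constraint2 z α
  have hφd : HasStrictFDerivAt φ
      (∑ α, (-B α) • ∑ i, (z i α • pr n d i α + z i α • pr n d i α)) z :=
    hasStrict_obj B z
  have hset : {y : Fin n → Fin d → ℝ | ∀ j, f j y = f j z} = C := by
    ext y
    constructor
    · intro h
      constructor
      · intro i
        have := h (Sum.inl i)
        simp only [hf, Sum.elim_inl] at this
        rw [this, hzC.1 i]
      · intro α
        have := h (Sum.inr α)
        simp only [hf, Sum.elim_inr] at this
        rw [this, hzC.2 α]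
    · intro h j
      cases j with
      | inl i => simp only [hf, Sum.elim_inl]; rw [h.1 i, hzC.1 i]
      | inr α => simp only [hf, Sum.elim_inr]; rw [h.2 α, hzC.2 α]
  have hextr : IsLocalExtrOn φ {y | ∀ j, f j y = f j z} z := by
    rw [hset]
    exact Or.inl (hzmin.filter_mono (Filter.le_principal_iff.mpr self_mem_nhdsWithin))
  obtain ⟨Λ, Λ₀, hΛne, hΛeq⟩ := hextr.exists_multipliers_of_hasStrictFDerivAt hfd hφd
  set lam : Fin n → ℝ := fun i => Λ (Sum.inl i) with hlam
  set mu : Fin d → ℝ := fun α => Λ (Sum.inr α) with hmu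
  -- stationarity equations
  have hstat : ∀ i₀ α₀, lam i₀ * (2 * z i₀ α₀) + mu α₀ + Λ₀ * ((-B α₀) * (2 * z i₀ α₀)) = 0 := by
    intro i₀ α₀
    have h := ContinuousLinearMap.ext_iff.mp hΛeq (Pi.single i₀ (Pi.single α₀ (1 : ℝ)))
    simp only [ContinuousLinearMap.add_apply, ContinuousLinearMap.coe_sum',
      Finset.sum_apply, ContinuousLinearMap.coe_smul', Pi.smul_apply,
      ContinuousLinearMap.zero_apply, smul_eq_mul] at h
    rw [Fintype.sum_sum_type] at h
    simp only [hf', Sum.elim_inl, Sum.elim_inr] at h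
    have e1 : ∀ i, ((∑ α, (z i α • pr n d i α + z i α • pr n d i α)) :
        (Fin n → Fin d → ℝ) →L[ℝ] ℝ) (Pi.single i₀ (Pi.single α₀ (1 : ℝ)))
        = if i = i₀ then 2 * z i α₀ else 0 := by
      intro i
      rw [ContinuousLinearMap.coe_sum', Finset.sum_apply]
      simp only [ContinuousLinearMap.add_apply, ContinuousLinearMap.coe_smul', Pi.smul_apply,
        smul_eq_mul, pr_single]
      rcases eq_or_ne i i₀ with hii | hii
      · subst hii
        simp [Finset.sum_add_distrib, mul_ite, mul_one, mul_zero, Finset.sum_ite_eq']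
        ring
      · simp [hii]
    have e2 : ∀ α, ((∑ i, pr n d i α) :
        (Fin n → Fin d → ℝ) →L[ℝ] ℝ) (Pi.single i₀ (Pi.single α₀ (1 : ℝ)))
        = if α = α₀ then 1 else 0 := by
      intro α
      rw [ContinuousLinearMap.coe_sum', Finset.sum_apply]
      simp only [pr_single]
      rcases eq_or_ne α α₀ with hαα | hαα
      · subst hαα
        simp [Finset.sum_ite_eq']
      · simp [hαα]
    have e3 : ∀ α : Fin d, (∑ i, (z i α * pr n d i α (Pi.single i₀ (Pi.single α₀ (1:ℝ)))
          + z i α * pr n d i α (Pi.single i₀ (Pi.single α₀ (1:ℝ)))))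
        = if α = α₀ then 2 * z i₀ α else 0 := by
      intro α
      simp only [pr_single]
      rcases eq_or_ne α α₀ with hαα | hαα
      · subst hαα
        simp [Finset.sum_add_distrib, mul_ite, mul_one, mul_zero, Finset.sum_ite_eq']
        ring
      · simp [hαα]
    simp only [e1, e2, e3] at h
    simp only [mul_ite, mul_zero, mul_one, Finset.sum_ite_eq', Finset.mem_univ, if_true] at h
    simp only [hlam, hmu]
    linear_combination h
  -- unit norms of z
  have hz1 : ∀ i, ∑ α, (z i α) ^ 2 = 1 := by
    intro i
    have h := hzC.1 i
    simp only [pow_two]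
    exact h
  -- distinct point bound
  have hncard : (Set.range z).ncard ≤ 2 * d := by
    by_cases hν : Λ₀ = 0
    · rw [hν] at hstat
      have hstat0 : ∀ i α, 2 * lam i * z i α = -mu α := by
        intro i α
        linear_combination hstat i α
      have hne0 : (∃ i, lam i ≠ 0) ∨ (∃ α, mu α ≠ 0) := by
        have hΛ : Λ ≠ 0 := by
          intro hΛ0
          exact hΛne (by rw [hΛ0, hν]; rfl)
        obtain ⟨j, hj⟩ := Function.ne_iff.mp hΛ
        cases j with
        | inl i => exact Or.inl ⟨i, hj⟩
        | inr α => exact Or.inr ⟨α, hj⟩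
      exact hcount0 lam mu hne0 z hz1 hstat0
    · have hstat2 : ∀ i α, 2 * (lam i - Λ₀ * B α) * z i α = -mu α := by
        intro i α
        linear_combination hstat i α
      exact hcount Λ₀ hν lam mu z hz1 hstat2
  -- Q comparison
  have hQ : ∀ y, y ∈ C → Qpoly n d A0 A B y
      = (A0 + ∑ α, A α * S α + ∑ α, B α * (S α) ^ 2) + φ y := by
    intro y hy
    have h1 : ∑ α, A α * ∑ i, y i α = ∑ α, A α * S α :=
      Finset.sum_congr rfl fun α _ => by rw [hy.2 α]
    have h2 : ∑ α, B α * (∑ i, y i α) ^ 2 = ∑ α, B α * (S α) ^ 2 :=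
      Finset.sum_congr rfl fun α _ => by rw [hy.2 α]
    have h3 : ∑ α, B α * ∑ i, (y i α) ^ 2 = -(φ y) := by
      simp only [hφ, pow_two, ← Finset.sum_neg_distrib]
      exact Finset.sum_congr rfl fun α _ => by ring
    rw [Qpoly_eq, h1, h2, h3]
    ring
  have hQle : Qpoly n d A0 A B z ≤ Qpoly n d A0 A B x := by
    rw [hQ z hzC, hQ x hxC]
    have := (isMinOn_iff.mp hzmin) x hxC
    linarith
  exact ⟨z, hz1, hncard, hQle⟩

end keymain

theorem stmt_0 (n d : ℕ) (hn : 1 ≤ n) (hd : 1 ≤ d)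
    (A0 : ℝ) (A B : Fin d → ℝ) :
    (∀ x : Fin n → Fin d → ℝ, (∀ i, ∑ α, (x i α) ^ 2 = 1) →
      0 ≤ Qpoly n d A0 A B x) ↔
    (∀ x : Fin n → Fin d → ℝ, (∀ i, ∑ α, (x i α) ^ 2 = 1) →
      (Set.range x).ncard ≤ 2 * d → 0 ≤ Qpoly n d A0 A B x) := by
  constructor
  · intro h x hx _
    exact h x hx
  · intro h x hx
    -- show 0 ≤ Q x by approximating B with injective B'
    have hmain : ∀ ε : ℝ, 0 < ε → -(2 * (ε * (n : ℝ) ^ 2)) ≤ Qpoly n d A0 A B x := by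
      intro ε hε
      obtain ⟨B', hB'inj, hB'near⟩ := exists_injective_near B hε
      have hkey := key hn hd A0 A B' hB'inj x hx
        (fun lam mu hne y hy hstat => count_lemma0 hn hd lam mu hne y hy hstat)
        (fun ν hν lam mu y hy hstat => count_lemma hd hB'inj hν lam mu hy hstat)
      obtain ⟨y, hy1, hy2, hy3⟩ := hkey
      have h0 : 0 ≤ Qpoly n d A0 A B y := h y hy1 hy2
      have hbx := Qpoly_pert A0 A B B' x hx
      have hby := Qpoly_pert A0 A B B' y hy1
      have hεn : (∑ α, |B α - B' α|) * (n : ℝ) ^ 2 ≤ ε * (n : ℝ) ^ 2 :=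
        mul_le_mul_of_nonneg_right hB'near (by positivity)
      have hax := abs_le.mp hbx
      have hay := abs_le.mp hby
      -- Q_B x ≥ Q_B' x - εn² ≥ Q_B' y - εn² ≥ Q_B y - 2εn² ≥ -2εn²
      nlinarith [hax.1, hax.2, hay.1, hay.2, hy3, h0, hεn]
    by_contra hneg
    push_neg at hneg
    have hn2 : (0 : ℝ) < (n : ℝ) ^ 2 := by
      have : (1 : ℝ) ≤ (n : ℝ) := by exact_mod_cast hn
      nlinarith
    set ε : ℝ := -Qpoly n d A0 A B x / (4 * (n : ℝ) ^ 2) with hεdef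
    have hε : 0 < ε := by
      apply div_pos (by linarith) (by linarith)
    have := hmain ε hε
    rw [hεdef] at this
    have h4 : -(2 * (-Qpoly n d A0 A B x / (4 * (n : ℝ) ^ 2) * (n : ℝ) ^ 2))
        = Qpoly n d A0 A B x / 2 := by
      field_simp
      ring
    rw [h4] at this
    linarith
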